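/- For an algebraic Kähler curvature tensor R acting on r-forms, one has Σ_a R_+(Je_a)(i(e_a)φ) = 0, i.e. Σ_{a,b} θ^b ∧ (R(Je_a, e_b)(i(e_a)φ)) = 0, for every r-form φ. -/

import Mathlib

open scoped RealInnerProductSpace
open Finset

noncomputable section

/-- `n`-forms on `V`: alternating `n`-linear maps `V^n → ℝ`. -/
abbrev Form (V : Type*) [AddCommGroup V] [Module ℝ V] (n : ℕ) :=
  AlternatingMap ℝ V ℝ (Fin n)

variable {V : Type*} [NormedAddCommGroup V] [InnerProductSpace ℝ V]

/-- The metric dual covector `X♭`, as a 1-form: `X♭(Y) = ⟪X, Y⟫`. -/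
def flat (X : V) : Form V 1 :=
  AlternatingMap.ofSubsingleton ℝ V ℝ 0 ((innerSL ℝ X).toLinearMap)

/-- Interior product `i(X)` on forms of positive degree. -/
def iprodS {n : ℕ} (X : V) (φ : Form V (n + 1)) : Form V n :=
  φ.curryLeft X

/-- Wedge product of a 1-form with an `n`-form. -/
def eps {n : ℕ} (ω : Form V 1) (φ : Form V n) : Form V (n + 1) :=
  AlternatingMap.domDomCongr (finSumFinEquiv.trans (finCongr (Nat.add_comm 1 n)))
    ((TensorProduct.lid ℝ ℝ).toLinearMap.compAlternatingMap (ω.domCoprod φ))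

/-- The Ricci endomorphism `ρ(X) = ∑ₐ R(X, eₐ) eₐ`. -/
def ric {q : ℕ} (R : V →ₗ[ℝ] V →ₗ[ℝ] (V →ₗ[ℝ] V))
    (e : OrthonormalBasis (Fin q) ℝ V) (X : V) : V :=
  ∑ a, R X (e a) (e a)

/-- `R₊(X) φ = ∑ₐ θᵃ ∧ (R(X, eₐ) φ)`. -/
def Rp {q : ℕ} (act : ∀ n : ℕ, (V →ₗ[ℝ] V) → Form V n → Form V n)
    (R : V →ₗ[ℝ] V →ₗ[ℝ] (V →ₗ[ℝ] V)) (e : OrthonormalBasis (Fin q) ℝ V)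
    {n : ℕ} (X : V) (φ : Form V n) : Form V (n + 1) :=
  ∑ a, eps (flat (e a)) (act n (R X (e a)) φ)

/-- `R₋(X) φ = ∑ₐ i(eₐ) (R(X, eₐ) φ)`. -/
def Rm {q : ℕ} (act : ∀ n : ℕ, (V →ₗ[ℝ] V) → Form V n → Form V n)
    (R : V →ₗ[ℝ] V →ₗ[ℝ] (V →ₗ[ℝ] V)) (e : OrthonormalBasis (Fin q) ℝ V)
    {n : ℕ} (X : V) (φ : Form V (n + 1)) : Form V n :=
  ∑ a, iprodS (e a) (act (n + 1) (R X (e a)) φ)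

/-- The curvature endomorphism `F(φ) = ∑_{a,b} θᵃ ∧ i(e_b) (R(e_b, eₐ) φ)`. -/
def Fop {q : ℕ} (act : ∀ n : ℕ, (V →ₗ[ℝ] V) → Form V n → Form V n)
    (R : V →ₗ[ℝ] V →ₗ[ℝ] (V →ₗ[ℝ] V)) (e : OrthonormalBasis (Fin q) ℝ V)
    {n : ℕ} (φ : Form V (n + 1)) : Form V (n + 1) :=
  ∑ a, ∑ b, eps (flat (e a)) (iprodS (e b) (act (n + 1) (R (e b) (e a)) φ))

lemma flat_apply (X : V) (v : Fin 1 → V) : flat X v = ⟪X, v 0⟫ := rfl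

lemma iprodS_apply {n : ℕ} (X : V) (φ : Form V (n+1)) (w : Fin n → V) :
    iprodS X φ w = φ (Fin.cons X w) := rfl

lemma eps_apply {n : ℕ} (ω : Form V 1) (ψ : Form V n) (v : Fin (n+1) → V) :
    eps ω ψ v = ∑ j : Fin (n+1), (-1:ℝ)^(j:ℕ) * (ω (fun _ => v j) * ψ (fun i => v (j.succAbove i))) := by
  unfold eps
  rw [AlternatingMap.domDomCongr_apply, LinearMap.compAlternatingMap_apply,
    AlternatingMap.domCoprod_apply, MultilinearMap.sum_apply, map_sum]
  set σ₀ : Fin 1 ⊕ Fin n ≃ Fin (n+1) := finSumFinEquiv.trans (finCongr (Nat.add_comm 1 n)) with hσ₀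
  have hσ₀l : σ₀ (Sum.inl 0) = 0 := by
    ext; simp [hσ₀]
  have hσ₀r : ∀ i : Fin n, σ₀ (Sum.inr i) = i.succ := by
    intro i; ext; simp [hσ₀, Nat.add_comm]
  set π : Fin (n+1) → Equiv.Perm (Fin 1 ⊕ Fin n) :=
    fun j => Equiv.permCongr σ₀.symm (Fin.cycleRange j).symm with hπ
  have hπl : ∀ j, π j (Sum.inl 0) = σ₀.symm j := by
    intro j; simp [hπ, Equiv.permCongr_apply, hσ₀l]
  have hπr : ∀ j i, σ₀ (π j (Sum.inr i)) = j.succAbove i := by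
    intro j i; simp [hπ, Equiv.permCongr_apply, hσ₀r]
  have hsign : ∀ j : Fin (n+1), Equiv.Perm.sign (π j) = (-1 : ℤˣ)^(j:ℕ) := by
    intro j
    rw [hπ]
    rw [Equiv.Perm.sign_permCongr]
    have : (Fin.cycleRange j).symm = (Fin.cycleRange j)⁻¹ := rfl
    rw [this, Equiv.Perm.sign_inv, Fin.sign_cycleRange]
  have hg : Function.Bijective (fun j : Fin (n+1) => (Quotient.mk'' (π j) : Equiv.Perm.ModSumCongr (Fin 1) (Fin n))) := by
    constructor
    · intro j j' h
      obtain ⟨⟨sl, sr⟩, hst⟩ := QuotientGroup.leftRel_apply.mp (Quotient.exact' h)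
      have h1 : π j * (Equiv.Perm.sumCongrHom _ _) (sl, sr) = π j' := by
        rw [hst]; group
      have h2 := congrArg (fun (p : Equiv.Perm (Fin 1 ⊕ Fin n)) => p (Sum.inl 0)) h1
      simp only [Equiv.Perm.mul_apply, Equiv.Perm.sumCongrHom_apply, Equiv.sumCongr_apply,
        Sum.map_inl] at h2
      rw [Subsingleton.elim (sl 0) 0] at h2
      rw [hπl, hπl] at h2
      exact σ₀.symm.injective h2
    · intro q
      induction q using Quotient.inductionOn' with
      | h σ =>
        refine ⟨σ₀ (σ (Sum.inl 0)), Quotient.sound' ?_⟩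
        rw [QuotientGroup.leftRel_apply]
        apply Equiv.Perm.mem_sumCongrHom_range_of_perm_mapsTo_inl
        rintro x ⟨a, rfl⟩
        have ha : a = 0 := Subsingleton.elim a 0
        subst ha
        refine ⟨0, ?_⟩
        have : π (σ₀ (σ (Sum.inl 0))) (Sum.inl 0) = σ (Sum.inl 0) := by
          rw [hπl]; exact σ₀.symm_apply_apply _
        symm
        show ((π (σ₀ (σ (Sum.inl 0))))⁻¹ * σ) (Sum.inl 0) = Sum.inl 0
        rw [Equiv.Perm.mul_apply]
        exact (π (σ₀ (σ (Sum.inl 0)))).injective (by rw [← Equiv.Perm.mul_apply, mul_inv_cancel, Equiv.Perm.one_apply, this])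
  symm
  refine Finset.sum_bij (fun (j : Fin (n+1)) _ => (Quotient.mk'' (π j))) (fun _ _ => Finset.mem_univ _)
    (fun j _ j' _ h => hg.1 h) (fun b _ => ((hg.2 b).imp (fun a ha => ⟨Finset.mem_univ _, ha⟩))) ?_
  intro j _
  simp only [AlternatingMap.domCoprod.summand_mk'', MultilinearMap.smul_apply,
    MultilinearMap.domDomCongr_apply, MultilinearMap.domCoprod_apply,
    AlternatingMap.coe_multilinearMap, Function.comp_apply]
  rw [hsign j]
  have harg1 : (fun i : Fin 1 => v (σ₀ (π j (Sum.inl i)))) = (fun _ : Fin 1 => v j) := by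
    funext i
    have hi : i = 0 := Subsingleton.elim i 0
    subst hi
    rw [hπl, Equiv.apply_symm_apply]
  have harg2 : (fun i : Fin n => v (σ₀ (π j (Sum.inr i)))) = (fun i => v (j.succAbove i)) := by
    funext i
    rw [hπr]
  rw [harg1, harg2, Units.smul_def, map_zsmul]
  simp only [LinearEquiv.coe_coe, TensorProduct.lid_tmul, smul_eq_mul, zsmul_eq_mul]
  push_cast
  ring

lemma eps_flat_apply {n : ℕ} (Z : V) (ψ : Form V n) (v : Fin (n+1) → V) :
    eps (flat Z) ψ v
      = ∑ j : Fin (n+1), (-1:ℝ)^(j:ℕ) * (⟪Z, v j⟫ * ψ (fun i => v (j.succAbove i))) := by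
  rw [eps_apply]
  refine Finset.sum_congr rfl fun j _ => ?_
  rw [flat_apply]

/-- interior product as a linear map in the form argument -/
def iprodL {n : ℕ} (X : V) : Form V (n+1) →ₗ[ℝ] Form V n where
  toFun φ := iprodS X φ
  map_add' φ ψ := by
    ext w; simp [iprodS_apply]
  map_smul' c φ := by
    ext w; simp [iprodS_apply]

lemma iprodS_sum {n : ℕ} {ι : Type*} (s : Finset ι) (f : ι → Form V (n+1)) (X : V) :
    iprodS X (∑ i ∈ s, f i) = ∑ i ∈ s, iprodS X (f i) :=
  map_sum (iprodL X) f s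

lemma iprodS_neg {n : ℕ} (X : V) (φ : Form V (n+1)) :
    iprodS X (-φ) = -iprodS X φ := map_neg (iprodL X) φ

/-- wedge with a 1-form as a linear map in the form argument -/
def epsL {n : ℕ} (ω : Form V 1) : Form V n →ₗ[ℝ] Form V (n+1) where
  toFun φ := eps ω φ
  map_add' φ ψ := by
    ext w; simp [eps_apply, mul_add, Finset.sum_add_distrib]
  map_smul' c φ := by
    ext w; simp [eps_apply, Finset.mul_sum, Finset.smul_sum]
    congr 1; funext j; ring

lemma epsS_sum {n : ℕ} {ι : Type*} (s : Finset ι) (f : ι → Form V n) (ω : Form V 1) :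
    eps ω (∑ i ∈ s, f i) = ∑ i ∈ s, eps ω (f i) :=
  map_sum (epsL ω) f s

lemma epsS_zero {n : ℕ} (ω : Form V 1) : eps ω (0 : Form V n) = 0 := map_zero (epsL ω)

lemma epsS_neg {n : ℕ} (ω : Form V 1) (φ : Form V n) : eps ω (-φ) = -eps ω φ :=
  map_neg (epsL ω) φ

/-- a form of positive degree vanishes iff all its interior products vanish -/
lemma eq_zero_of_iprod {n : ℕ} (θ : Form V (n+1)) (h : ∀ X : V, iprodS X θ = 0) : θ = 0 := by
  ext v
  have h2 := congrArg (fun ξ => ξ (Fin.tail v)) (h (v 0))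
  simpa [iprodS_apply, Fin.cons_self_tail] using h2

/-- interior product contracted through an orthonormal basis -/
lemma iprodS_contract {q n : ℕ} (e : OrthonormalBasis (Fin q) ℝ V) (T : V →ₗ[ℝ] V) (X : V)
    (φ : Form V (n+1)) :
    ∑ b, ⟪e b, X⟫ • iprodS (T (e b)) φ = iprodS (T X) φ := by
  unfold iprodS
  conv_rhs => rw [← e.sum_repr' X]
  rw [map_sum, map_sum]
  refine Finset.sum_congr rfl fun b _ => ?_
  rw [map_smul, map_smul]

/-- anticommutation of two interior products -/
lemma iprod_iprod {n : ℕ} (X Y : V) (φ : Form V (n+2)) :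
    iprodS X (iprodS Y φ) = -iprodS Y (iprodS X φ) := by
  ext w
  rw [AlternatingMap.neg_apply, iprodS_apply, iprodS_apply, iprodS_apply, iprodS_apply]
  have hswap : (Fin.cons X (Fin.cons Y w) : Fin (n+2) → V) ∘ (Equiv.swap (0 : Fin (n+2)) 1)
      = Fin.cons Y (Fin.cons X w) := by
    funext k
    refine Fin.cases ?_ (fun l => ?_) k
    · simp [Equiv.swap_apply_left]
    · refine Fin.cases ?_ (fun m => ?_) l
      · have : ((0 : Fin (n+1)).succ : Fin (n+2)) = 1 := rfl
        simp [this, Equiv.swap_apply_right]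
      · have h1 : (m.succ.succ : Fin (n+2)) ≠ 0 := Fin.succ_ne_zero _
        have h2 : (m.succ.succ : Fin (n+2)) ≠ 1 := by
          intro h
          have := Fin.succ_injective _ (h.trans rfl : m.succ.succ = (0 : Fin (n+1)).succ)
          exact Fin.succ_ne_zero _ this
        simp [Function.comp_apply, Equiv.swap_apply_of_ne_of_ne h1 h2]
  have := φ.map_swap (Fin.cons X (Fin.cons Y w)) (Fin.ne_of_val_ne (by norm_num) :
    (0 : Fin (n+2)) ≠ 1)
  rw [hswap] at this
  rw [this]

/-- interior product of a wedge: positive-degree case -/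
lemma iprod_eps {n : ℕ} (Z X : V) (ψ : Form V (n+1)) :
    iprodS X (eps (flat Z) ψ) = ⟪Z,X⟫ • ψ - eps (flat Z) (iprodS X ψ) := by
  ext w
  rw [AlternatingMap.sub_apply, AlternatingMap.smul_apply, iprodS_apply, eps_flat_apply,
    Fin.sum_univ_succ]
  have h0 : (fun i => (Fin.cons X w : Fin (n+2) → V) ((0:Fin (n+2)).succAbove i)) = w := by
    funext i; simp
  have hs : ∀ (i : Fin (n+1)),
      (fun k => (Fin.cons X w : Fin (n+2) → V) ((i.succ).succAbove k))
        = Fin.cons X (fun k => w (i.succAbove k)) := by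
    intro i
    funext k
    refine Fin.cases ?_ (fun l => ?_) k
    · rw [Fin.succ_succAbove_zero, Fin.cons_zero, Fin.cons_zero]
    · rw [Fin.succ_succAbove_succ, Fin.cons_succ, Fin.cons_succ]
  rw [h0]
  simp only [Fin.cons_zero, Fin.cons_succ, pow_zero, one_mul, Fin.val_succ]
  rw [eps_flat_apply]
  have : ∀ (i : Fin (n+1)), (-1:ℝ)^((i:ℕ)+1) * (⟪Z, w i⟫ * ψ (Fin.cons X fun k => w (i.succAbove k)))
      = -((-1:ℝ)^(i:ℕ) * (⟪Z, w i⟫ * (iprodS X ψ) fun k => w (i.succAbove k))) := by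
    intro i
    rw [iprodS_apply, pow_succ]
    ring
  rw [Finset.sum_congr rfl (fun i _ => by rw [hs i, this i])]
  rw [Finset.sum_neg_distrib]
  simp only [Fin.val_zero, pow_zero, one_mul, smul_eq_mul]
  ring

/-- interior product of a wedge: degree-zero case -/
lemma iprod_eps0 (Z X : V) (ψ : Form V 0) :
    iprodS X (eps (flat Z) ψ) = ⟪Z,X⟫ • ψ := by
  ext w
  rw [AlternatingMap.smul_apply, iprodS_apply, eps_flat_apply, Fin.sum_univ_succ]
  simp only [Finset.univ_eq_empty, Finset.sum_empty, add_zero, Fin.cons_zero, pow_zero, one_mul]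
  rw [Subsingleton.elim (fun i => (Fin.cons X w : Fin 1 → V) ((0:Fin 1).succAbove i)) w]
  simp [smul_eq_mul]

lemma formSum_apply {n : ℕ} {ι : Type*} (s : Finset ι) (f : ι → Form V n) (v : Fin n → V) :
    (∑ i ∈ s, f i) v = ∑ i ∈ s, f i v := by
  induction s using Finset.cons_induction_on with
  | empty => simp
  | cons _ _ ha ih => rw [Finset.sum_cons, Finset.sum_cons, AlternatingMap.add_apply, ih]

section ActLemmas

variable (act : ∀ n : ℕ, (V →ₗ[ℝ] V) → Form V n → Form V n)
variable (hact : ∀ (n : ℕ) (A : V →ₗ[ℝ] V) (φ : Form V n) (v : Fin n → V),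
      act n A φ v = -∑ k, φ (Function.update v k (A (v k))))

include hact

lemma act_zero (A : V →ₗ[ℝ] V) (ψ : Form V 0) : act 0 A ψ = 0 := by
  ext v
  rw [hact]
  simp

lemma act_neg {n : ℕ} (A : V →ₗ[ℝ] V) (ψ : Form V n) : act n A (-ψ) = -act n A ψ := by
  ext v
  rw [AlternatingMap.neg_apply, hact, hact]
  simp

/-- contraction of the derivation action through an orthonormal basis -/
lemma act_contract {q n : ℕ} (e : OrthonormalBasis (Fin q) ℝ V)
    (T : V →ₗ[ℝ] (V →ₗ[ℝ] V)) (X : V) (ψ : Form V n) :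
    ∑ b, ⟪e b, X⟫ • act n (T (e b)) ψ = act n (T X) ψ := by
  ext v
  rw [formSum_apply, hact]
  have : ∀ k : Fin n, ψ (Function.update v k (T X (v k)))
      = ∑ b, ⟪e b, X⟫ • ψ (Function.update v k (T (e b) (v k))) := by
    intro k
    have hX : T X (v k) = ∑ b, ⟪e b, X⟫ • T (e b) (v k) := by
      conv_lhs => rw [← e.sum_repr' X]
      rw [map_sum, LinearMap.sum_apply]
      refine Finset.sum_congr rfl fun b _ => ?_
      rw [map_smul, LinearMap.smul_apply]
    rw [hX, ψ.map_update_sum]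
    refine Finset.sum_congr rfl fun b _ => ?_
    rw [ψ.map_update_smul]
  rw [Finset.sum_congr rfl (fun k _ => this k), Finset.sum_comm]
  rw [← Finset.sum_neg_distrib]
  refine Finset.sum_congr rfl fun b _ => ?_
  rw [AlternatingMap.smul_apply, hact]
  simp [Finset.mul_sum]

/-- commuting an interior product past the derivation action -/
lemma iprod_act {n : ℕ} (A : V →ₗ[ℝ] V) (φ : Form V (n+1)) (X : V) :
    iprodS X (act (n+1) A φ) = act n A (iprodS X φ) - iprodS (A X) φ := by
  ext w
  rw [AlternatingMap.sub_apply, iprodS_apply, hact, hact, iprodS_apply, Fin.sum_univ_succ]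
  have h0 : Function.update (Fin.cons X w : Fin (n+1) → V) (0 : Fin (n+1))
        (A ((Fin.cons X w : Fin (n+1) → V) 0))
      = (Fin.cons (A X) w : Fin (n+1) → V) := by
    rw [Fin.cons_zero, Fin.update_cons_zero]
  have hs : ∀ i : Fin n, Function.update (Fin.cons X w : Fin (n+1) → V) i.succ
        (A ((Fin.cons X w : Fin (n+1) → V) i.succ))
      = (Fin.cons X (Function.update w i (A (w i))) : Fin (n+1) → V) := by
    intro i
    rw [Fin.cons_succ, ← Fin.cons_update]
  rw [h0, Finset.sum_congr rfl (fun i _ => by rw [hs i])]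
  simp only [iprodS_apply]
  abel

end ActLemmas

/-- contraction of a symmetric endomorphism against two interior products vanishes -/
lemma contract_sym_zero {q n : ℕ} (e : OrthonormalBasis (Fin q) ℝ V) (A : V →ₗ[ℝ] V)
    (hA : ∀ u w : V, ⟪A u, w⟫ = ⟪u, A w⟫) (φ : Form V (n+2)) :
    ∑ a, iprodS (A (e a)) (iprodS (e a) φ) = 0 := by
  have expand : ∀ a, iprodS (A (e a)) (iprodS (e a) φ)
      = ∑ c, ⟪e c, A (e a)⟫ • iprodS (e c) (iprodS (e a) φ) := by
    intro a
    unfold iprodS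
    conv_lhs => rw [← e.sum_repr' (A (e a))]
    rw [map_sum]
    refine Finset.sum_congr rfl fun c _ => ?_
    rw [map_smul]
  have key : (∑ a, iprodS (A (e a)) (iprodS (e a) φ))
      = -∑ a, iprodS (A (e a)) (iprodS (e a) φ) := by
    conv_lhs =>
      rw [Finset.sum_congr rfl (fun a _ => expand a)]
    rw [Finset.sum_comm]
    rw [← Finset.sum_neg_distrib]
    refine Finset.sum_congr rfl fun c _ => ?_
    rw [expand c, ← Finset.sum_neg_distrib]
    refine Finset.sum_congr rfl fun a _ => ?_
    have hg : ⟪e c, A (e a)⟫ = ⟪e a, A (e c)⟫ := by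
      rw [real_inner_comm (A (e a)) (e c), hA]
    rw [iprod_iprod, smul_neg, hg]
  have h2 : (2:ℝ) • (∑ a, iprodS (A (e a)) (iprodS (e a) φ)) = 0 := by
    rw [two_smul]
    nth_rewrite 2 [key]
    abel
  have := smul_eq_zero.mp h2
  simpa using this

lemma iprodS_vec_sub {n : ℕ} (u w : V) (φ : Form V (n+1)) :
    iprodS u φ - iprodS w φ = iprodS (u - w) φ := by
  unfold iprodS; rw [map_sub]

lemma iprodS_add {n : ℕ} (X : V) (φ ψ : Form V (n+1)) :
    iprodS X (φ + ψ) = iprodS X φ + iprodS X ψ := by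
  ext w; simp [iprodS_apply]

section Curvature

variable (J : V →ₗ[ℝ] V) (hJO : ∀ x y : V, ⟪J x, J y⟫ = ⟪x, y⟫)
    (hJ2 : ∀ x : V, J (J x) = -x)
    (R : V →ₗ[ℝ] V →ₗ[ℝ] (V →ₗ[ℝ] V))
    (hRskew : ∀ X Y : V, R X Y = -R Y X)
    (hRskewadj : ∀ X Y u v : V, ⟪R X Y u, v⟫ = -⟪u, R X Y v⟫)
    (hRbianchi : ∀ X Y Z : V, R X Y Z + R Y Z X + R Z X Y = 0)
    (hRJ : ∀ X Y v : V, R X Y (J v) = J (R X Y v))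

include hJO hJ2 in
lemma J_skew : ∀ u w : V, ⟪J u, w⟫ = -⟪u, J w⟫ := by
  intro u w
  have h1 : ⟪u, J w⟫ = ⟪J u, J (J w)⟫ := (hJO u (J w)).symm
  rw [h1, hJ2, inner_neg_right, neg_neg]

include hJO hJ2 hRskewadj hRJ in
lemma JR_sym (X Y : V) : ∀ u w : V, ⟪(J ∘ₗ R X Y) u, w⟫ = ⟪u, (J ∘ₗ R X Y) w⟫ := by
  intro u w
  have h1 : ⟪(J ∘ₗ R X Y) u, w⟫ = -⟪R X Y u, J w⟫ := J_skew J hJO hJ2 (R X Y u) w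
  rw [h1, hRskewadj, neg_neg, hRJ]
  rfl

include hRskew hRbianchi hRJ in
lemma bianchiD (X Y : V) : ∀ u : V, R (J u) Y X - R (J u) X Y = (J ∘ₗ R X Y) u := by
  intro u
  have hb := hRbianchi (J u) Y X
  have h1 : R X (J u) Y = -(R (J u) X Y) := by rw [hRskew X (J u)]; rfl
  have h2 : R Y X (J u) = -(J (R X Y u)) := by
    rw [hRskew Y X]
    show (-(R X Y)) (J u) = _
    rw [LinearMap.neg_apply, hRJ]
  rw [h1, h2] at hb
  have : (J ∘ₗ R X Y) u = J (R X Y u) := rfl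
  rw [this]
  linear_combination (norm := module) hb

include hJO hJ2 hRskew hRskewadj hRbianchi hRJ in
lemma endgame {q n : ℕ} (e : OrthonormalBasis (Fin q) ℝ V) (X Y : V) (φ : Form V (n+2)) :
    ∑ a, (iprodS (R (J (e a)) Y X) (iprodS (e a) φ)
        - iprodS (R (J (e a)) X Y) (iprodS (e a) φ)) = 0 := by
  have step : ∀ a, iprodS (R (J (e a)) Y X) (iprodS (e a) φ)
        - iprodS (R (J (e a)) X Y) (iprodS (e a) φ)
      = iprodS ((J ∘ₗ R X Y) (e a)) (iprodS (e a) φ) := by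
    intro a
    rw [iprodS_vec_sub, bianchiD J R hRskew hRbianchi hRJ X Y (e a)]
  rw [Finset.sum_congr rfl fun a _ => step a]
  exact contract_sym_zero e (J ∘ₗ R X Y) (JR_sym J hJO hJ2 R hRskewadj hRJ X Y) φ

end Curvature

section Main

variable (J : V →ₗ[ℝ] V) (hJO : ∀ x y : V, ⟪J x, J y⟫ = ⟪x, y⟫)
    (hJ2 : ∀ x : V, J (J x) = -x)
    (R : V →ₗ[ℝ] V →ₗ[ℝ] (V →ₗ[ℝ] V))
    (hRskew : ∀ X Y : V, R X Y = -R Y X)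
    (hRskewadj : ∀ X Y u v : V, ⟪R X Y u, v⟫ = -⟪u, R X Y v⟫)
    (hRbianchi : ∀ X Y Z : V, R X Y Z + R Y Z X + R Z X Y = 0)
    (hRJ : ∀ X Y v : V, R X Y (J v) = J (R X Y v))
    (act : ∀ n : ℕ, (V →ₗ[ℝ] V) → Form V n → Form V n)
    (hact : ∀ (n : ℕ) (A : V →ₗ[ℝ] V) (φ : Form V n) (v : Fin n → V),
      act n A φ v = -∑ k, φ (Function.update v k (A (v k))))

include hJO hJ2 hRskew hRskewadj hRbianchi hRJ hact in
lemma lemA {q : ℕ} (e : OrthonormalBasis (Fin q) ℝ V) :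
    ∀ (n : ℕ) (X : V) (φ : Form V (n+2)),
      (∑ a, act (n+1) (R (J (e a)) X) (iprodS (e a) φ))
        + ∑ a, ∑ b, eps (flat (e b)) (iprodS (R (J (e a)) (e b) X) (iprodS (e a) φ)) = 0 := by
  intro n
  induction n with
  | zero =>
    intro X φ
    apply eq_zero_of_iprod
    intro Y
    rw [iprodS_add, iprodS_sum, iprodS_sum]
    have h1 : ∀ a : Fin q, iprodS Y (act 1 (R (J (e a)) X) (iprodS (e a) φ))
        = -iprodS (R (J (e a)) X Y) (iprodS (e a) φ) := by
      intro a
      rw [iprod_act act hact, act_zero act hact, zero_sub]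
    have h2 : ∀ a : Fin q,
        iprodS Y (∑ b, eps (flat (e b)) (iprodS (R (J (e a)) (e b) X) (iprodS (e a) φ)))
        = iprodS (R (J (e a)) Y X) (iprodS (e a) φ) := by
      intro a
      rw [iprodS_sum]
      rw [Finset.sum_congr rfl fun b _ =>
        iprod_eps0 (e b) Y (iprodS (R (J (e a)) (e b) X) (iprodS (e a) φ))]
      have hT : ∀ b : Fin q, iprodS (R (J (e a)) (e b) X) (iprodS (e a) φ)
          = iprodS (((R (J (e a))).flip X) (e b)) (iprodS (e a) φ) := fun b => rfl
      rw [Finset.sum_congr rfl fun b _ => by rw [hT b]]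
      rw [iprodS_contract e ((R (J (e a))).flip X) Y (iprodS (e a) φ)]
      rfl
    rw [Finset.sum_congr rfl fun a _ => h1 a, Finset.sum_congr rfl fun a _ => h2 a]
    have hend := endgame J hJO hJ2 R hRskew hRskewadj hRbianchi hRJ e X Y φ
    rw [Finset.sum_sub_distrib] at hend
    rw [Finset.sum_neg_distrib]
    linear_combination (norm := module) hend
  | succ n ih =>
    intro X φ
    apply eq_zero_of_iprod
    intro Y
    rw [iprodS_add, iprodS_sum, iprodS_sum]
    have h1 : ∀ a : Fin q, iprodS Y (act (n+2) (R (J (e a)) X) (iprodS (e a) φ))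
        = -(act (n+1) (R (J (e a)) X) (iprodS (e a) (iprodS Y φ)))
          - iprodS (R (J (e a)) X Y) (iprodS (e a) φ) := by
      intro a
      rw [iprod_act act hact, iprod_iprod, act_neg act hact]
    have h2 : ∀ a : Fin q,
        iprodS Y (∑ b, eps (flat (e b)) (iprodS (R (J (e a)) (e b) X) (iprodS (e a) φ)))
        = iprodS (R (J (e a)) Y X) (iprodS (e a) φ)
          - ∑ b, eps (flat (e b))
              (iprodS (R (J (e a)) (e b) X) (iprodS (e a) (iprodS Y φ))) := by
      intro a
      rw [iprodS_sum]
      have hB : ∀ b : Fin q,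
          iprodS Y (eps (flat (e b)) (iprodS (R (J (e a)) (e b) X) (iprodS (e a) φ)))
          = ⟪e b, Y⟫ • iprodS (R (J (e a)) (e b) X) (iprodS (e a) φ)
            - eps (flat (e b))
                (iprodS (R (J (e a)) (e b) X) (iprodS (e a) (iprodS Y φ))) := by
        intro b
        rw [iprod_eps (e b) Y (iprodS (R (J (e a)) (e b) X) (iprodS (e a) φ))]
        rw [iprod_iprod Y (R (J (e a)) (e b) X) (iprodS (e a) φ), epsS_neg,
          iprod_iprod Y (e a) φ, iprodS_neg, epsS_neg, neg_neg]
      rw [Finset.sum_congr rfl fun b _ => hB b]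
      rw [Finset.sum_sub_distrib]
      have hT : ∀ b : Fin q, iprodS (R (J (e a)) (e b) X) (iprodS (e a) φ)
          = iprodS (((R (J (e a))).flip X) (e b)) (iprodS (e a) φ) := fun b => rfl
      rw [Finset.sum_congr rfl fun b _ => by rw [hT b]]
      rw [iprodS_contract e ((R (J (e a))).flip X) Y (iprodS (e a) φ)]
      rfl
    rw [Finset.sum_congr rfl fun a _ => h1 a, Finset.sum_congr rfl fun a _ => h2 a]
    have hIH := ih X (iprodS Y φ)
    have hend := endgame J hJO hJ2 R hRskew hRskewadj hRbianchi hRJ e X Y φ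
    rw [Finset.sum_sub_distrib] at hend
    rw [Finset.sum_sub_distrib, Finset.sum_sub_distrib, Finset.sum_neg_distrib]
    linear_combination (norm := module) hend - hIH

end Main

lemma epsS_sub {n : ℕ} (ω : Form V 1) (φ ψ : Form V n) :
    eps ω (φ - ψ) = eps ω φ - eps ω ψ := map_sub (epsL ω) φ ψ

/-- For an algebraic Kähler curvature tensor `R` acting on `r`-forms,
`∑ₐ R₊(J eₐ)(i(eₐ)φ) = 0`, i.e. `∑_{a,b} θᵇ ∧ (R(J eₐ, e_b)(i(eₐ)φ)) = 0`,
for every `r`-form `φ`. -/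
theorem sum_Rp_J_interior_eq_zero
    {m : ℕ} (hm : 1 ≤ m)
    (J : V →ₗ[ℝ] V) (hJO : ∀ x y : V, ⟪J x, J y⟫ = ⟪x, y⟫)
    (hJ2 : ∀ x : V, J (J x) = -x)
    (e : OrthonormalBasis (Fin (2 * m)) ℝ V)
    (R : V →ₗ[ℝ] V →ₗ[ℝ] (V →ₗ[ℝ] V))
    (hRskew : ∀ X Y : V, R X Y = -R Y X)
    (hRskewadj : ∀ X Y u v : V, ⟪R X Y u, v⟫ = -⟪u, R X Y v⟫)
    (hRbianchi : ∀ X Y Z : V, R X Y Z + R Y Z X + R Z X Y = 0)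
    (hRJ : ∀ X Y v : V, R X Y (J v) = J (R X Y v))
    (hRJJ : ∀ X Y : V, R (J X) (J Y) = R X Y)
    (act : ∀ n : ℕ, (V →ₗ[ℝ] V) → Form V n → Form V n)
    (hact : ∀ (n : ℕ) (A : V →ₗ[ℝ] V) (φ : Form V n) (v : Fin n → V),
      act n A φ v = -∑ k, φ (Function.update v k (A (v k)))) :
    ∀ (r : ℕ) (φ : Form V (r + 1)),
      ∑ a, Rp act R e (J (e a)) (iprodS (e a) φ) = 0 := by
  intro r
  induction r with
  | zero =>
    intro φ
    have hz : ∀ a : Fin (2*m), Rp act R e (J (e a)) (iprodS (e a) φ) = 0 := by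
      intro a
      unfold Rp
      rw [Finset.sum_congr rfl fun b _ => by rw [act_zero act hact, epsS_zero]]
      exact Finset.sum_const_zero
    rw [Finset.sum_congr rfl fun a _ => hz a]
    exact Finset.sum_const_zero
  | succ r ih =>
    intro φ
    apply eq_zero_of_iprod
    intro X
    unfold Rp
    rw [iprodS_sum]
    have key : ∀ a : Fin (2*m),
        iprodS X (∑ b, eps (flat (e b)) (act (r+1) (R (J (e a)) (e b)) (iprodS (e a) φ)))
        = act (r+1) (R (J (e a)) X) (iprodS (e a) φ)
          + ∑ b, eps (flat (e b)) (act r (R (J (e a)) (e b)) (iprodS (e a) (iprodS X φ)))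
          + ∑ b, eps (flat (e b)) (iprodS (R (J (e a)) (e b) X) (iprodS (e a) φ)) := by
      intro a
      rw [iprodS_sum]
      have hB : ∀ b : Fin (2*m),
          iprodS X (eps (flat (e b)) (act (r+1) (R (J (e a)) (e b)) (iprodS (e a) φ)))
          = ⟪e b, X⟫ • act (r+1) (R (J (e a)) (e b)) (iprodS (e a) φ)
            + (eps (flat (e b)) (act r (R (J (e a)) (e b)) (iprodS (e a) (iprodS X φ)))
              + eps (flat (e b)) (iprodS (R (J (e a)) (e b) X) (iprodS (e a) φ))) := by
        intro b
        rw [iprod_eps (e b) X (act (r+1) (R (J (e a)) (e b)) (iprodS (e a) φ))]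
        rw [iprod_act act hact, iprod_iprod X (e a) φ, act_neg act hact]
        rw [epsS_sub, epsS_neg]
        module
      rw [Finset.sum_congr rfl fun b _ => hB b]
      rw [Finset.sum_add_distrib]
      rw [act_contract act hact e (R (J (e a))) X (iprodS (e a) φ)]
      rw [Finset.sum_add_distrib]
      abel
    rw [Finset.sum_congr rfl fun a _ => key a]
    rw [Finset.sum_add_distrib, Finset.sum_add_distrib]
    have hIH := ih (iprodS X φ)
    unfold Rp at hIH
    have hA := lemA J hJO hJ2 R hRskew hRskewadj hRbianchi hRJ act hact e r X φ
    linear_combination (norm := module) hIH + hA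


end
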